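/- Let {Ω̄_i}_{i=1}^{n+1} be an affinely independent collection of path-connected subsets of ℝⁿ, and let u : ℝⁿ → ℝ be a convex function. Then there is at most one point x₀ such that ∂u(x₀) intersects every Ω̄_i, 1 ≤ i ≤ n+1. -/

import Mathlib

open Set

noncomputable section

/-- The subdifferential of `f : ℝⁿ → ℝ` at `x`. -/
def subdiff {n : ℕ} (f : EuclideanSpace ℝ (Fin n) → ℝ) (x : EuclideanSpace ℝ (Fin n)) :
    Set (EuclideanSpace ℝ (Fin n)) :=
  {p | ∀ y, f x + inner ℝ p (y - x) ≤ f y}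

/-- Uniqueness of maximal multiplicity tears: if `{Ω̄ᵢ}_{i=1}^{n+1}` is an affinely
independent collection of path-connected subsets of `ℝⁿ` and `u` is convex, then there is at
most one point whose subdifferential meets every `Ω̄ᵢ`. -/
theorem unique_max_multiplicity_tear (n : ℕ)
    (Ω : Fin (n + 1) → Set (EuclideanSpace ℝ (Fin n)))
    (hpath : ∀ i, IsPathConnected (Ω i))
    (hai : ∀ p : Fin (n + 1) → EuclideanSpace ℝ (Fin n),
      (∀ i, p i ∈ Ω i) → AffineIndependent ℝ p)
    (u : EuclideanSpace ℝ (Fin n) → ℝ) (hu : ConvexOn ℝ univ u) :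
    ∀ x y : EuclideanSpace ℝ (Fin n),
      (∀ i, (subdiff u x ∩ Ω i).Nonempty) → (∀ i, (subdiff u y ∩ Ω i).Nonempty) →
      x = y := by
  intro x y hx hy
  by_contra hxy
  set v := y - x with hv
  have hvne : v ≠ 0 := sub_ne_zero.mpr (Ne.symm hxy)
  set c := u y - u x with hc
  -- In each Ω i find a point on the hyperplane ⟪v, ·⟫ = c
  have key : ∀ i, ∃ r ∈ Ω i, (inner ℝ v r : ℝ) = c := by
    intro i
    obtain ⟨p, hp, hpΩ⟩ := hx i
    obtain ⟨q, hq, hqΩ⟩ := hy i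
    have hpc : (inner ℝ v p : ℝ) ≤ c := by
      have h := hp y
      rw [real_inner_comm]
      simp only [hv]
      linarith
    have hqc : c ≤ (inner ℝ v q : ℝ) := by
      have h := hq x
      have hx' : x - y = -v := by rw [hv]; abel
      rw [hx', inner_neg_right] at h
      rw [real_inner_comm]
      linarith
    obtain ⟨γ, hγ⟩ := (hpath i).joinedIn p hpΩ q hqΩ
    have hcont : Continuous fun t : unitInterval => (inner ℝ v (γ t) : ℝ) :=
      continuous_const.inner γ.continuous
    have hmem : c ∈ Icc (inner ℝ v (γ 0) : ℝ) (inner ℝ v (γ 1) : ℝ) := by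
      simpa using ⟨hpc, hqc⟩
    obtain ⟨t, ht⟩ := intermediate_value_univ (0 : unitInterval) 1 hcont hmem
    exact ⟨γ t, hγ t, ht⟩
  choose r hrΩ hrc using key
  have hAI := hai r hrΩ
  have hspan : affineSpan ℝ (range r) = ⊤ := by
    rw [hAI.affineSpan_eq_top_iff_card_eq_finrank_add_one]
    simp
  let f : EuclideanSpace ℝ (Fin n) →ᵃ[ℝ] ℝ := ((innerSL ℝ v).toLinearMap).toAffineMap
  let H : AffineSubspace ℝ (EuclideanSpace ℝ (Fin n)) :=
    AffineSubspace.comap f (AffineSubspace.mk' c (⊥ : Submodule ℝ ℝ))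
  have hmemH : ∀ z, z ∈ H ↔ (inner ℝ v z : ℝ) = c := by
    intro z
    simp only [H, AffineSubspace.mem_comap, AffineSubspace.mem_mk']
    simp [f, sub_eq_zero]
  have hsub : affineSpan ℝ (range r) ≤ H := by
    rw [affineSpan_le]
    rintro _ ⟨i, rfl⟩
    exact (hmemH (r i)).mpr (hrc i)
  rw [hspan, top_le_iff] at hsub
  have hxc : (inner ℝ v x : ℝ) = c := (hmemH x).mp (hsub ▸ AffineSubspace.mem_top ℝ _ x)
  have hyc : (inner ℝ v y : ℝ) = c := (hmemH y).mp (hsub ▸ AffineSubspace.mem_top ℝ _ y)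
  have : (inner ℝ v v : ℝ) = 0 := by
    rw [hv, inner_sub_right, hxc, hyc, sub_self]
  exact hvne (inner_self_eq_zero.mp this)
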